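/- Let s ∈ ℂ with s ≠ 0 and s ≠ 1. Suppose f ∈ ℂ[X] is a polynomial of degree 4 with f(0) = 0, f(1) = 1, and whose derivative vanishes at 0, 1 and s (i.e., f'(0) = f'(1) = f'(s) = 0). Then 2s − 1 ≠ 0 and f is uniquely determined: f = (12/(2s − 1))·((1/4)X⁴ − ((s+1)/3)X³ + (s/2)X²). -/
import Mathlib

open Polynomial Finset

theorem stmt_7 (s : ℂ) (hs0 : s ≠ 0) (hs1 : s ≠ 1) (f : ℂ[X])
    (hdeg : f.degree = 4)
    (hf0 : f.eval 0 = 0) (hf1 : f.eval 1 = 1)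
    (hd0 : (derivative f).eval 0 = 0) (hd1 : (derivative f).eval 1 = 0)
    (hds : (derivative f).eval s = 0) :
    2 * s - 1 ≠ 0 ∧
    f = C (12 / (2 * s - 1)) *
      (C (1 / 4 : ℂ) * X ^ 4 - C ((s + 1) / 3) * X ^ 3 + C (s / 2) * X ^ 2) := by
  have hnd : f.natDegree = 4 := natDegree_eq_of_degree_eq_some hdeg
  have h4 : f.coeff 4 ≠ 0 := by
    have := coeff_ne_zero_of_eq_degree (n := 4) (by exact_mod_cast hdeg)
    exact this
  have hbig : ∀ n, 4 < n → f.coeff n = 0 := by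
    intro n hn
    apply coeff_eq_zero_of_degree_lt
    rw [hdeg]
    exact_mod_cast hn
  have h5 : f.coeff 5 = 0 := hbig 5 (by norm_num)
  have e0 : f.coeff 0 = 0 := by rw [coeff_zero_eq_eval_zero]; exact hf0
  have ea1 : f.coeff 1 = 0 := by
    have h := coeff_zero_eq_eval_zero (derivative f)
    rw [coeff_derivative] at h
    rw [hd0] at h
    simpa using h
  have hdnd : (derivative f).natDegree < 5 :=
    lt_of_le_of_lt (natDegree_derivative_le f) (by omega)
  rw [eval_eq_sum_range' (show f.natDegree < 5 by omega)] at hf1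
  simp only [Finset.sum_range_succ, Finset.sum_range_zero] at hf1
  rw [eval_eq_sum_range' hdnd] at hd1 hds
  simp only [Finset.sum_range_succ, Finset.sum_range_zero, coeff_derivative] at hd1 hds
  norm_num [e0, ea1, h5] at hf1 hd1 hds
  -- now derive coefficient values
  obtain ⟨a2, ha2⟩ : ∃ a, f.coeff 2 = a := ⟨_, rfl⟩
  obtain ⟨a3, ha3⟩ : ∃ a, f.coeff 3 = a := ⟨_, rfl⟩
  obtain ⟨a4, ha4⟩ : ∃ a, f.coeff 4 = a := ⟨_, rfl⟩
  rw [ha2, ha3, ha4] at hf1 hd1 hds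
  rw [ha4] at h4
  have h3 : 3 * a3 + 4 * a4 * (s + 1) = 0 := by
    have hm : (3 * a3 + 4 * a4 * (s + 1)) * (s * (s - 1)) = 0 := by
      linear_combination hds - s * hd1
    rcases mul_eq_zero.1 hm with h | h
    · exact h
    · rcases mul_eq_zero.1 h with h | h
      · exact absurd h hs0
      · exact absurd (sub_eq_zero.1 h) hs1
  have h2 : 2 * a2 = 4 * a4 * s := by linear_combination hd1 - h3
  have hkey : a4 * (2 * s - 1) = 3 := by linear_combination 3 * hf1 - (3/2) * h2 - h3
  have h2s1 : 2 * s - 1 ≠ 0 := by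
    intro h
    rw [h, mul_zero] at hkey
    norm_num at hkey
  refine ⟨h2s1, ?_⟩
  have va4 : a4 = 3 / (2 * s - 1) := by
    rw [eq_div_iff h2s1]; linear_combination hkey
  have va3 : a3 = -4 * (s + 1) / (2 * s - 1) := by
    rw [eq_div_iff h2s1]
    linear_combination ((2*s-1)/3) * h3 - (4*(s+1)/3) * hkey
  have va2 : a2 = 6 * s / (2 * s - 1) := by
    rw [eq_div_iff h2s1]
    linear_combination ((2*s-1)/2) * h2 + 2 * s * hkey
  ext n
  match n with
  | 0 => simp [coeff_X_pow, e0]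
  | 1 => simp [coeff_X_pow, ea1]
  | 2 =>
    simp only [coeff_C_mul, coeff_add, coeff_sub, coeff_X_pow]
    norm_num
    rw [ha2, va2]; field_simp; ring
  | 3 =>
    simp only [coeff_C_mul, coeff_add, coeff_sub, coeff_X_pow]
    norm_num
    rw [ha3, va3]; field_simp; ring
  | 4 =>
    simp only [coeff_C_mul, coeff_add, coeff_sub, coeff_X_pow]
    norm_num
    rw [ha4, va4]; field_simp; ring
  | (n+5) =>
    rw [hbig (n+5) (by omega)]
    simp [coeff_X_pow]
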